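/- Define L_{d,H} = Σ_{m = 3^H}^{3^(H+1) − 1} γ_d(m)·(log₃(m+1) − log₃(m)), where γ_d(m) counts ternary digits of m equal to d. Then L_{d,H}/(H+1) → 1/3 as H → ∞. -/

import Mathlib

open Filter

/-- `L d H = Σ_{m = 3^H}^{3^(H+1)−1} γ_d(m)·(log₃(m+1) − log₃ m)`, where `γ_d(m)` is the
number of ternary digits of `m` equal to `d`. -/
noncomputable def Lsum (d H : ℕ) : ℝ :=
  ∑ m ∈ Finset.Ico (3 ^ H) (3 ^ (H + 1)),
    ((Nat.digits 3 m).count d : ℝ) *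
      (Real.log (m + 1) / Real.log 3 - Real.log m / Real.log 3)

noncomputable def csum (d H : ℕ) : ℝ :=
  ∑ q ∈ Finset.Ico (3 ^ H) (3 ^ (H + 1) : ℕ),
    (Real.log (3*(q:ℝ)+d+1) - Real.log (3*(q:ℝ)+d)) / Real.log 3

lemma sum_reindex (a b : ℕ) (f : ℕ → ℝ) :
    ∑ m ∈ Finset.Ico (3*a) (3*b), f m
      = ∑ q ∈ Finset.Ico a b, ∑ r ∈ Finset.range 3, f (3*q+r) := by
  rw [← Finset.sum_product']
  refine (Finset.sum_nbij' (fun p => 3*p.1+p.2) (fun m => (m/3, m%3)) ?_ ?_ ?_ ?_ ?_).symm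
  · rintro ⟨q, r⟩ hp
    simp only [Finset.mem_product, Finset.mem_Ico, Finset.mem_range] at hp
    simp only [Finset.mem_Ico]; omega
  · intro m hm
    simp only [Finset.mem_Ico] at hm
    simp only [Finset.mem_product, Finset.mem_Ico, Finset.mem_range]
    omega
  · rintro ⟨q, r⟩ hp
    simp only [Finset.mem_product, Finset.mem_Ico, Finset.mem_range] at hp
    simp only [Prod.mk.injEq]; omega
  · intro m hm; show 3*(m/3)+m%3 = m; omega
  · rintro ⟨q, r⟩ _; rfl

lemma Lsum_succ (d : ℕ) (hd : d < 3) (H : ℕ) :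
    Lsum d (H+1) = Lsum d H + csum d H := by
  have h3 : (3:ℕ)^(H+1+1) = 3 * 3^(H+1) := by ring
  have h3' : (3:ℕ)^(H+1) = 3 * 3^H := by ring
  rw [Lsum, h3, h3', sum_reindex, ← h3']
  rw [Lsum, csum, ← Finset.sum_add_distrib]
  refine Finset.sum_congr rfl fun q hq => ?_
  have hq1 : 1 ≤ q := le_trans (Nat.one_le_pow _ _ (by norm_num)) (Finset.mem_Ico.mp hq).1
  have hdig : ∀ r, r < 3 → Nat.digits 3 (3*q+r) = r :: Nat.digits 3 q := by
    intro r hr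
    rw [Nat.digits_def' (by norm_num : 1 < 3) (by omega)]
    congr 1
    · omega
    · congr 1; omega
  have expand : ∀ r : ℕ, r < 3 →
      ((Nat.digits 3 (3*q+r)).count d : ℝ)
        = ((Nat.digits 3 q).count d : ℝ) + (if r = d then 1 else 0) := by
    intro r hr
    rw [hdig r hr, List.count_cons]
    by_cases h : r = d
    · subst h; simp
    · simp [h]
  rw [Finset.sum_range_succ, Finset.sum_range_succ, Finset.sum_range_one]
  rw [expand 0 (by norm_num), expand 1 (by norm_num), expand 2 (by norm_num)]
  have hq0 : (0:ℝ) < q := by exact_mod_cast hq1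
  have l0 : Real.log (3*(q:ℝ)) = Real.log 3 + Real.log q := by
    rw [Real.log_mul (by norm_num) (by positivity)]
  have l3 : Real.log (3*((q:ℝ)+1)) = Real.log 3 + Real.log ((q:ℝ)+1) := by
    rw [Real.log_mul (by norm_num) (by positivity)]
  have e1 : ((3*q+0:ℕ):ℝ) = 3*(q:ℝ) := by push_cast; ring
  have e2 : ((3*q+1:ℕ):ℝ) = 3*(q:ℝ)+1 := by push_cast; ring
  have e3 : ((3*q+2:ℕ):ℝ) = 3*(q:ℝ)+2 := by push_cast; ring
  have e4 : (3*(q:ℝ)+2)+1 = 3*((q:ℝ)+1) := by ring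
  have hl3 : Real.log 3 ≠ 0 := ne_of_gt (Real.log_pos (by norm_num))
  interval_cases d <;>
  · simp only [e1, e2, e3]
    push_cast
    simp only [add_zero]
    rw [show (3:ℝ)*(q:ℝ)+2+1 = 3*((q:ℝ)+1) by ring, l0, l3]
    field_simp
    ring

lemma log_ratio_bounds (x : ℝ) (hx : 0 < x) :
    1/(x+1) ≤ Real.log (x+1) - Real.log x ∧ Real.log (x+1) - Real.log x ≤ 1/x := by
  have h1 : Real.log (x+1) - Real.log x = Real.log ((x+1)/x) := by
    rw [Real.log_div (by positivity) (ne_of_gt hx)]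
  constructor
  · rw [h1]
    have h2 := Real.one_sub_inv_le_log_of_pos (show 0 < (x+1)/x by positivity)
    have hinv : ((x+1)/x)⁻¹ = x/(x+1) := by rw [inv_div]
    rw [hinv] at h2
    calc 1/(x+1) = 1 - x/(x+1) := by field_simp; ring
    _ ≤ _ := h2
  · rw [h1]
    calc Real.log ((x+1)/x) ≤ (x+1)/x - 1 :=
          Real.log_le_sub_one_of_pos (by positivity)
    _ = 1/x := by field_simp; ring

lemma term_bound (x y : ℝ) (hx : 1 ≤ x) (hy0 : 0 ≤ y) (hy2 : y ≤ 2) :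
    |(Real.log (3*x+y+1) - Real.log (3*x+y))
      - (1/3) * (Real.log (x+1) - Real.log x)| ≤ 1/(3*x^2) := by
  have hx0 : 0 < x := by linarith
  have hz : 0 < 3*x+y := by linarith
  obtain ⟨hA1, hA2⟩ := log_ratio_bounds (3*x+y) hz
  obtain ⟨hB1, hB2⟩ := log_ratio_bounds x hx0
  rw [abs_le]
  have e1 : (1:ℝ)/(3*x+y) ≤ 1/(3*x) := by
    apply one_div_le_one_div_of_le (by linarith) (by linarith)
  have e2 : (1:ℝ)/(3*x+3) ≤ 1/(3*x+y+1) := by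
    apply one_div_le_one_div_of_le (by linarith) (by linarith)
  have e3 : (1:ℝ)/(3*(x+1)) = 1/(3*x+3) := by ring_nf
  have e4 : (1:ℝ)/(3*x) - 1/(3*x+3) ≤ 1/(3*x^2) := by
    rw [div_sub_div _ _ (by positivity) (by positivity), div_le_div_iff₀ (by positivity) (by positivity)]
    ring_nf
    nlinarith
  have e5 : (1:ℝ)/(3*x+3) = (1/3)*(1/(x+1)) := by
    rw [div_mul_div_comm]; ring_nf
  have hB1' : (1:ℝ)/(3*x+3) ≤ (1/3) * (Real.log (x+1) - Real.log x) := by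
    rw [e5]; linarith
  have hB2' : (1/3) * (Real.log (x+1) - Real.log x) ≤ 1/(3*x) := by
    rw [show (1:ℝ)/(3*x) = (1/3)*(1/x) by rw [div_mul_div_comm]; ring_nf]
    linarith
  have hA1' : (1:ℝ)/(3*x+3) ≤ Real.log (3*x+y+1) - Real.log (3*x+y) := e2.trans hA1
  have hA2' : Real.log (3*x+y+1) - Real.log (3*x+y) ≤ 1/(3*x) := hA2.trans e1
  constructor <;> linarith

lemma telescope (f : ℕ → ℝ) (a b : ℕ) (h : a ≤ b) :
    ∑ i ∈ Finset.Ico a b, (f (i+1) - f i) = f b - f a := by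
  rw [Finset.sum_Ico_eq_sub _ h, Finset.sum_range_sub, Finset.sum_range_sub]
  ring

lemma csum_close (d : ℕ) (hd : d < 3) (H : ℕ) :
    |csum d H - 1/3| ≤ (2/(3*Real.log 3)) * (1/3)^H := by
  have hl3 : (0:ℝ) < Real.log 3 := Real.log_pos (by norm_num)
  have hle : (3:ℕ)^H ≤ 3^(H+1) := Nat.pow_le_pow_right (by norm_num) (by omega)
  have htel : ∑ q ∈ Finset.Ico ((3:ℕ)^H) (3^(H+1)),
      (Real.log ((q:ℝ)+1) - Real.log (q:ℝ)) = Real.log 3 := by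
    have h := telescope (fun i => Real.log (i:ℝ)) (3^H) (3^(H+1)) hle
    have h2 : ∑ q ∈ Finset.Ico ((3:ℕ)^H) (3^(H+1)),
        (Real.log ((q:ℝ)+1) - Real.log (q:ℝ))
        = ∑ i ∈ Finset.Ico ((3:ℕ)^H) (3^(H+1)),
            (Real.log ((i+1:ℕ):ℝ) - Real.log (i:ℝ)) := by
      apply Finset.sum_congr rfl; intro i _; push_cast; ring
    rw [h2, h]
    push_cast
    rw [Real.log_pow, Real.log_pow]
    push_cast; ring
  have key : csum d H - 1/3
      = ∑ q ∈ Finset.Ico ((3:ℕ)^H) (3^(H+1)),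
          ((Real.log (3*(q:ℝ)+d+1) - Real.log (3*(q:ℝ)+d))
            - (1/3)*(Real.log ((q:ℝ)+1) - Real.log (q:ℝ))) / Real.log 3 := by
    have h1 : ∑ q ∈ Finset.Ico ((3:ℕ)^H) (3^(H+1)),
          ((Real.log (3*(q:ℝ)+d+1) - Real.log (3*(q:ℝ)+d))
            - (1/3)*(Real.log ((q:ℝ)+1) - Real.log (q:ℝ))) / Real.log 3
        = (∑ q ∈ Finset.Ico ((3:ℕ)^H) (3^(H+1)),
            (Real.log (3*(q:ℝ)+d+1) - Real.log (3*(q:ℝ)+d))) / Real.log 3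
          - (1/3) * (∑ q ∈ Finset.Ico ((3:ℕ)^H) (3^(H+1)),
              (Real.log ((q:ℝ)+1) - Real.log (q:ℝ))) / Real.log 3 := by
      rw [Finset.mul_sum, ← sub_div, ← Finset.sum_sub_distrib, Finset.sum_div]
    rw [h1, htel, csum, ← Finset.sum_div, mul_div_assoc, div_self (ne_of_gt hl3), mul_one]
  rw [key]
  set s := Finset.Ico ((3:ℕ)^H) (3^(H+1)) with hs
  have hcard : s.card = 2 * 3^H := by
    rw [hs, Nat.card_Ico]; ring_nf; omega
  have hterm : ∀ q ∈ s,
      |((Real.log (3*(q:ℝ)+d+1) - Real.log (3*(q:ℝ)+d))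
          - (1/3)*(Real.log ((q:ℝ)+1) - Real.log (q:ℝ))) / Real.log 3|
        ≤ (1/(3*((3:ℝ)^H)^2)) / Real.log 3 := by
    intro q hq
    have hq1 : (3:ℕ)^H ≤ q := (Finset.mem_Ico.mp hq).1
    have hq1' : ((3:ℝ)^H) ≤ (q:ℝ) := by exact_mod_cast hq1
    have hx1 : (1:ℝ) ≤ (q:ℝ) := by
      have h1 : (1:ℕ) ≤ q := le_trans (Nat.one_le_pow _ _ (by norm_num)) hq1
      exact_mod_cast h1
    rw [abs_div, abs_of_pos hl3]
    gcongr
    refine (term_bound (q:ℝ) (d:ℝ) hx1 (by positivity)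
      (by exact_mod_cast Nat.le_of_lt_succ hd)).trans ?_
    apply one_div_le_one_div_of_le (by positivity)
    have h0 : (0:ℝ) ≤ (3:ℝ)^H := by positivity
    nlinarith
  refine le_trans (Finset.abs_sum_le_sum_abs _ _)
    (le_trans (Finset.sum_le_sum hterm) ?_)
  rw [Finset.sum_const, nsmul_eq_mul, hcard]
  rw [div_pow, one_pow]
  have h3 : ((3:ℝ)^H) ≠ 0 := by positivity
  push_cast
  apply le_of_eq
  field_simp

lemma csum_tendsto (d : ℕ) (hd : d < 3) :
    Tendsto (fun H => csum d H) atTop (nhds (1/3 : ℝ)) := by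
  have h0 : Tendsto (fun H : ℕ => csum d H - 1/3) atTop (nhds 0) := by
    refine squeeze_zero_norm (a := fun H : ℕ => (2/(3*Real.log 3)) * (1/3)^H) (fun H => ?_) ?_
    · rw [Real.norm_eq_abs]; exact csum_close d hd H
    · have h := (tendsto_pow_atTop_nhds_zero_of_lt_one
        (by norm_num : (0:ℝ) ≤ 1/3) (by norm_num)).const_mul (2/(3*Real.log 3))
      simpa using h
  have h1 := h0.add_const (1/3)
  simpa using h1

/-- Uniform distribution of frequency in leading digits: `L_{d,H}/(H+1) → 1/3`. -/
theorem Lsum_div_tendsto (d : ℕ) (hd : d ∈ ({0, 1, 2} : Finset ℕ)) :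
    Tendsto (fun H : ℕ => Lsum d H / ((H : ℝ) + 1)) atTop (nhds (1 / 3)) := by
  have hd3 : d < 3 := by fin_cases hd <;> norm_num
  set a : ℕ → ℝ := fun n => Nat.rec (Lsum d 0) (fun k _ => csum d k) n with ha
  have hsum : ∀ H, ∑ i ∈ Finset.range (H+1), a i = Lsum d H := by
    intro H
    induction H with
    | zero => simp [ha]
    | succ n ih =>
        rw [Finset.sum_range_succ, ih, Lsum_succ d hd3 n]
  have hta : Tendsto a atTop (nhds (1/3 : ℝ)) := by
    rw [← tendsto_add_atTop_iff_nat 1]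
    exact csum_tendsto d hd3
  have hcomp := (hta.cesaro).comp (tendsto_add_atTop_nat 1)
  refine hcomp.congr fun H => ?_
  show (((H+1 : ℕ) : ℝ))⁻¹ * ∑ i ∈ Finset.range (H+1), a i = _
  rw [hsum]
  push_cast
  rw [div_eq_inv_mul]
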